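/- Gumbel-max trick: if G_1,...,G_m are i.i.d. standard Gumbel random variables (with CDF exp(−exp(−t))) and a_1,...,a_m are real numbers, then P(argmax_k (a_k + G_k) = j) = exp(a_j)/∑_{k=1}^m exp(a_k). -/

import Mathlib

open MeasureTheory ProbabilityTheory Set Filter Real

noncomputable def gumbelDen (c t : ℝ) : ℝ :=
  c * Real.exp (-t) * Real.exp (-c * Real.exp (-t))

noncomputable def gumbelMeasure (c : ℝ) : Measure ℝ :=
  MeasureTheory.volume.withDensity fun t => ENNReal.ofReal (gumbelDen c t)

lemma gumbelDen_nonneg {c : ℝ} (hc : 0 < c) (t : ℝ) : 0 ≤ gumbelDen c t := by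
  unfold gumbelDen
  positivity

lemma continuous_gumbelDen (c : ℝ) : Continuous (gumbelDen c) := by
  unfold gumbelDen; fun_prop

lemma hasDerivAt_gumbel (c t : ℝ) :
    HasDerivAt (fun t => Real.exp (-c * Real.exp (-t))) (gumbelDen c t) t := by
  have h1 : HasDerivAt (fun t : ℝ => -t) (-1) t := (hasDerivAt_id t).neg
  have h2 : HasDerivAt (fun t : ℝ => Real.exp (-t)) (Real.exp (-t) * (-1)) t :=
    (Real.hasDerivAt_exp (-t)).comp t h1
  have h3 : HasDerivAt (fun t : ℝ => -c * Real.exp (-t))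
      (-c * (Real.exp (-t) * (-1))) t := h2.const_mul (-c)
  have h4 := (Real.hasDerivAt_exp (-c * Real.exp (-t))).comp t h3
  refine h4.congr_deriv ?_
  unfold gumbelDen
  ring

lemma gumbelDen_le {c : ℝ} (hc : 0 < c) (t : ℝ) :
    gumbelDen c t ≤ (4 / c) * Real.exp t := by
  set x := c * Real.exp (-t) with hxdef
  have hx : 0 < x := by positivity
  have hex : x ^ 2 / 4 ≤ Real.exp x := by
    have h1 : x / 2 ≤ Real.exp (x / 2) := by
      have := Real.add_one_le_exp (x / 2)
      linarith
    have h2 : (x / 2) ^ 2 ≤ (Real.exp (x / 2)) ^ 2 := by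
      apply sq_le_sq' <;> nlinarith [Real.exp_pos (x / 2)]
    calc x ^ 2 / 4 = (x / 2) ^ 2 := by ring
    _ ≤ (Real.exp (x / 2)) ^ 2 := h2
    _ = Real.exp x := by rw [sq, ← Real.exp_add, add_halves]
  have hgd : gumbelDen c t = x / Real.exp x := by
    unfold gumbelDen
    rw [neg_mul, Real.exp_neg (c * Real.exp (-t)), div_eq_mul_inv]
  have hle : x / Real.exp x ≤ x / (x ^ 2 / 4) :=
    div_le_div_of_nonneg_left hx.le (by positivity) hex
  have heq : x / (x ^ 2 / 4) = 4 / x := by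
    rw [div_eq_div_iff (by positivity) hx.ne']
    ring
  have hfin : 4 / x = (4 / c) * Real.exp t := by
    rw [hxdef, Real.exp_neg]
    field_simp [hc.ne']
  rw [hgd, ← hfin]
  exact hle.trans_eq heq

lemma gumbelDen_integrableOn {c : ℝ} (hc : 0 < c) (a : ℝ) :
    IntegrableOn (gumbelDen c) (Iic a) := by
  apply Integrable.mono' (g := fun t => (4 / c) * Real.exp t)
  · exact (integrableOn_exp_Iic a).const_mul _
  · exact ((continuous_gumbelDen c).aestronglyMeasurable).restrict
  · filter_upwards with t
    rw [Real.norm_eq_abs, abs_of_nonneg (gumbelDen_nonneg hc t)]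
    exact gumbelDen_le hc t

lemma gumbel_Iic {c : ℝ} (hc : 0 < c) (a : ℝ) :
    gumbelMeasure c (Iic a) = ENNReal.ofReal (Real.exp (-c * Real.exp (-a))) := by
  rw [gumbelMeasure, withDensity_apply _ measurableSet_Iic]
  rw [← ofReal_integral_eq_lintegral_ofReal (gumbelDen_integrableOn hc a)
      (Filter.Eventually.of_forall fun t => gumbelDen_nonneg hc t)]
  congr 1
  have htend : Tendsto (fun t : ℝ => Real.exp (-c * Real.exp (-t))) atBot (nhds 0) := by
    have h1 : Tendsto (fun t : ℝ => Real.exp (-t)) atBot atTop :=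
      Real.tendsto_exp_atTop.comp tendsto_neg_atBot_atTop
    have h2 : Tendsto (fun t : ℝ => -(c * Real.exp (-t))) atBot atBot :=
      tendsto_neg_atTop_atBot.comp (h1.const_mul_atTop hc)
    have h3 : Tendsto (fun t : ℝ => Real.exp (-(c * Real.exp (-t)))) atBot (nhds 0) :=
      Real.tendsto_exp_atBot.comp h2
    simpa [neg_mul] using h3
  rw [integral_Iic_of_hasDerivAt_of_tendsto' (fun x _ => hasDerivAt_gumbel c x)
      (gumbelDen_integrableOn hc a) htend, sub_zero]

lemma gumbel_univ {c : ℝ} (hc : 0 < c) : gumbelMeasure c Set.univ = 1 := by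
  have h1 : Tendsto (fun a : ℝ => gumbelMeasure c (Iic a)) atTop
      (nhds (gumbelMeasure c Set.univ)) := tendsto_measure_Iic_atTop _
  have h2 : Tendsto (fun a : ℝ => gumbelMeasure c (Iic a)) atTop (nhds 1) := by
    simp_rw [fun a => gumbel_Iic hc a]
    have : Tendsto (fun a : ℝ => Real.exp (-c * Real.exp (-a))) atTop (nhds 1) := by
      have h3 : Tendsto (fun a : ℝ => -c * Real.exp (-a)) atTop (nhds 0) := by
        have := (Real.tendsto_exp_atBot.comp tendsto_neg_atTop_atBot).const_mul (-c)
        simpa using this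
      simpa [Function.comp_def] using (Real.continuous_exp.tendsto 0).comp h3
    have := (ENNReal.continuous_ofReal.tendsto 1).comp this
    simpa [Function.comp_def] using this
  exact tendsto_nhds_unique h1 h2

lemma measurable_gumbelDen_ofReal (c : ℝ) :
    Measurable fun t => ENNReal.ofReal (gumbelDen c t) :=
  (continuous_gumbelDen c).measurable.ennreal_ofReal

lemma eq_gumbel {c : ℝ} (hc : 0 < c) (ν : Measure ℝ) [IsFiniteMeasure ν]
    (h : ∀ t, ν (Iic t) = ENNReal.ofReal (Real.exp (-c * Real.exp (-t)))) :
    ν = gumbelMeasure c := by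
  refine MeasureTheory.Measure.ext_of_Iic ν _ fun t => ?_
  rw [h t, gumbel_Iic hc t]

lemma gumbel_Iio {c : ℝ} (hc : 0 < c) (a : ℝ) :
    gumbelMeasure c (Iio a) = ENNReal.ofReal (Real.exp (-c * Real.exp (-a))) := by
  rw [← gumbel_Iic hc a, gumbelMeasure, withDensity_apply _ measurableSet_Iio,
    withDensity_apply _ measurableSet_Iic, Measure.restrict_congr_set Iio_ae_eq_Iic]

lemma gumbel_lintegral {c : ℝ} (hc : 0 < c) :
    ∫⁻ x, ENNReal.ofReal (Real.exp (-c * Real.exp (-x))) ∂(gumbelMeasure 1) =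
      ENNReal.ofReal (1 / (1 + c)) := by
  rw [gumbelMeasure, lintegral_withDensity_eq_lintegral_mul _ (measurable_gumbelDen_ofReal 1)
      ((by fun_prop : Measurable fun x : ℝ => Real.exp (-c * Real.exp (-x))).ennreal_ofReal)]
  have key : ∀ x : ℝ, (ENNReal.ofReal (gumbelDen 1 x) *
      ENNReal.ofReal (Real.exp (-c * Real.exp (-x)))) =
      ENNReal.ofReal (1 / (1 + c)) * ENNReal.ofReal (gumbelDen (1 + c) x) := by
    intro x
    rw [← ENNReal.ofReal_mul (gumbelDen_nonneg one_pos x),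
      ← ENNReal.ofReal_mul (by positivity)]
    congr 1
    unfold gumbelDen
    have hA : (-1 : ℝ) * Real.exp (-x) + -c * Real.exp (-x) = -(1 + c) * Real.exp (-x) := by
      ring
    rw [mul_assoc, ← Real.exp_add, hA]
    have h1c : (1 : ℝ) + c ≠ 0 := by positivity
    field_simp
  calc ∫⁻ x, (fun t => ENNReal.ofReal (gumbelDen 1 t)) x *
        (fun t => ENNReal.ofReal (Real.exp (-c * Real.exp (-t)))) x
      = ∫⁻ x, ENNReal.ofReal (1 / (1 + c)) * ENNReal.ofReal (gumbelDen (1 + c) x) := by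
        simp only [key]
    _ = ENNReal.ofReal (1 / (1 + c)) * ∫⁻ x, ENNReal.ofReal (gumbelDen (1 + c) x) := by
        rw [lintegral_const_mul _ (measurable_gumbelDen_ofReal (1 + c))]
    _ = ENNReal.ofReal (1 / (1 + c)) := by
        have : ∫⁻ x, ENNReal.ofReal (gumbelDen (1 + c) x) = gumbelMeasure (1 + c) Set.univ := by
          rw [gumbelMeasure, withDensity_apply _ MeasurableSet.univ, Measure.restrict_univ]
        rw [this, gumbel_univ (by positivity), mul_one]

/-- Gumbel-max trick: if `G₁,…,G_m` are i.i.d. standard Gumbel random variables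
(CDF `exp(−exp(−t))`) and `a₁,…,a_m` are reals, then the probability that
`a_j + G_j` is the (almost surely unique) maximum of the `a_k + G_k` equals
`exp(a_j) / ∑_k exp(a_k)`. -/
theorem gumbel_max_trick
    {Ω : Type*} [MeasurableSpace Ω] (P : Measure Ω) [IsProbabilityMeasure P]
    {m : ℕ} (hm : 1 ≤ m) (G : Fin m → Ω → ℝ)
    (hmeas : ∀ k, Measurable (G k))
    (hindep : iIndepFun G P)
    (hcdf : ∀ k (t : ℝ),
      P {ω | G k ω ≤ t} = ENNReal.ofReal (Real.exp (-Real.exp (-t))))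
    (a : Fin m → ℝ) (j : Fin m) :
    P {ω | ∀ k, k ≠ j → a k + G k ω < a j + G j ω} =
      ENNReal.ofReal (Real.exp (a j) / ∑ k, Real.exp (a k)) := by
  classical
  by_cases hone : ∀ k : Fin m, k = j
  · have hset : {ω | ∀ k, k ≠ j → a k + G k ω < a j + G j ω} = Set.univ := by
      ext ω
      simp only [Set.mem_setOf_eq, Set.mem_univ, iff_true]
      intro k hk
      exact absurd (hone k) hk
    have huniv : (Finset.univ : Finset (Fin m)) = {j} := by
      ext k
      simp [hone k]
    have hsum : ∑ k, Real.exp (a k) = Real.exp (a j) := by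
      rw [huniv, Finset.sum_singleton]
    rw [hset, hsum, measure_univ, div_self (Real.exp_ne_zero _), ENNReal.ofReal_one]
  · push_neg at hone
    set s : Finset (Fin m) := Finset.univ.erase j with hsdef
    have hs : s.Nonempty := by
      obtain ⟨k, hk⟩ := hone
      exact ⟨k, Finset.mem_erase.mpr ⟨hk, Finset.mem_univ k⟩⟩
    have hsa : s.attach.Nonempty := hs.attach
    set c : ℝ := ∑ k ∈ s, Real.exp (a k - a j) with hcdef
    have hc : 0 < c := Finset.sum_pos (fun k _ => Real.exp_pos _) hs
    set Y : Ω → ℝ := fun ω => s.attach.sup' hsa (fun i => a i + G i ω - a j) with hY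
    have hYmeas : Measurable Y := by
      have hYeq : Y = s.attach.sup' hsa
          (fun (i : {x // x ∈ s}) (ω : Ω) => a i + G i ω - a j) := by
        funext ω
        rw [Finset.sup'_apply]
      rw [hYeq]
      exact Finset.measurable_sup' hsa
        (fun i _ => (measurable_const.add (hmeas i)).sub measurable_const)
    have hevent : {ω | ∀ k, k ≠ j → a k + G k ω < a j + G j ω} = {ω | Y ω < G j ω} := by
      ext ω
      simp only [Set.mem_setOf_eq, hY, Finset.sup'_lt_iff]
      constructor
      · intro h i _
        have hij : (i : Fin m) ≠ j := (Finset.mem_erase.mp i.2).1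
        have := h i hij
        linarith
      · intro h k hk
        have := h ⟨k, Finset.mem_erase.mpr ⟨hk, Finset.mem_univ k⟩⟩ (Finset.mem_attach _ _)
        linarith
    have hdisj : Disjoint ({j} : Finset (Fin m)) s := by
      rw [Finset.disjoint_singleton_left]
      intro h
      exact (Finset.mem_erase.mp h).1 rfl
    have hIndT := hindep.indepFun_finset {j} s hdisj hmeas
    have hφ2 : Measurable fun v : {x // x ∈ s} → ℝ =>
        s.attach.sup' hsa (fun i => a i + v i - a j) := by
      have heq2 : (fun v : {x // x ∈ s} → ℝ => s.attach.sup' hsa (fun i => a i + v i - a j))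
          = s.attach.sup' hsa
            (fun (i : {x // x ∈ s}) (v : {x // x ∈ s} → ℝ) => a i + v i - a j) := by
        funext v
        rw [Finset.sup'_apply]
      rw [heq2]
      exact Finset.measurable_sup' hsa
        (fun i _ => (measurable_const.add (measurable_pi_apply i)).sub measurable_const)
    have hInd : IndepFun (G j) Y P := by
      have h := hIndT.comp
        (φ := fun v : {x // x ∈ ({j} : Finset (Fin m))} → ℝ =>
          v ⟨j, Finset.mem_singleton_self j⟩)
        (ψ := fun v : {x // x ∈ s} → ℝ => s.attach.sup' hsa (fun i => a i + v i - a j))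
        (measurable_pi_apply _ : Measurable fun v : {x // x ∈ ({j} : Finset (Fin m))} → ℝ =>
          v ⟨j, Finset.mem_singleton_self j⟩) hφ2
      exact h
    set μ := P.map (G j) with hμdef
    set ν := P.map Y with hνdef
    have inst1 : IsProbabilityMeasure μ := Measure.isProbabilityMeasure_map (hmeas j).aemeasurable
    have inst2 : IsProbabilityMeasure ν := Measure.isProbabilityMeasure_map hYmeas.aemeasurable
    have hμIic : ∀ t, μ (Iic t) = ENNReal.ofReal (Real.exp (-1 * Real.exp (-t))) := by
      intro t
      rw [hμdef, Measure.map_apply (hmeas j) measurableSet_Iic]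
      have h' : G j ⁻¹' Iic t = {ω | G j ω ≤ t} := rfl
      rw [h', hcdf j t, neg_one_mul]
    have hμ : μ = gumbelMeasure 1 := eq_gumbel one_pos μ hμIic
    have hνIic : ∀ t, ν (Iic t) = ENNReal.ofReal (Real.exp (-c * Real.exp (-t))) := by
      intro t
      rw [hνdef, Measure.map_apply hYmeas measurableSet_Iic]
      have hset2 : Y ⁻¹' Iic t = ⋂ k ∈ s, G k ⁻¹' Iic (t + a j - a k) := by
        ext ω
        simp only [Set.mem_preimage, Set.mem_Iic, hY, Finset.sup'_le_iff, Set.mem_iInter]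
        constructor
        · intro h k hk
          have := h ⟨k, hk⟩ (Finset.mem_attach _ _)
          linarith
        · intro h i _
          have := h i i.2
          linarith
      rw [hset2, hindep.meas_biInter (fun k _ => ⟨Iic (t + a j - a k), measurableSet_Iic, rfl⟩)]
      have hterm : ∀ k ∈ s, P (G k ⁻¹' Iic (t + a j - a k)) =
          ENNReal.ofReal (Real.exp (-(Real.exp (a k - a j) * Real.exp (-t)))) := by
        intro k _
        have h' : G k ⁻¹' Iic (t + a j - a k) = {ω | G k ω ≤ t + a j - a k} := rfl
        rw [h', hcdf k]
        congr 2
        rw [← Real.exp_add]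
        ring_nf
      rw [Finset.prod_congr rfl hterm,
        ← ENNReal.ofReal_prod_of_nonneg (fun k _ => (Real.exp_pos _).le)]
      congr 1
      rw [← Real.exp_sum]
      congr 1
      rw [hcdef, neg_mul, Finset.sum_mul, ← Finset.sum_neg_distrib]
    have hν : ν = gumbelMeasure c := eq_gumbel hc ν hνIic
    rw [hevent]
    have hpair : P.map (fun ω => (G j ω, Y ω)) = μ.prod ν :=
      (indepFun_iff_map_prod_eq_prod_map_map (hmeas j).aemeasurable hYmeas.aemeasurable).mp hInd
    have hsetlt : MeasurableSet {p : ℝ × ℝ | p.2 < p.1} :=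
      measurableSet_lt measurable_snd measurable_fst
    have hpre : {ω | Y ω < G j ω} = (fun ω => (G j ω, Y ω)) ⁻¹' {p : ℝ × ℝ | p.2 < p.1} := rfl
    rw [hpre, ← Measure.map_apply ((hmeas j).prodMk hYmeas) hsetlt, hpair,
      Measure.prod_apply hsetlt]
    have hslice : ∀ x : ℝ, (Prod.mk x ⁻¹' {p : ℝ × ℝ | p.2 < p.1}) = Iio x := by
      intro x
      ext y
      simp
    have hνIio : ∀ x, ν (Iio x) = ENNReal.ofReal (Real.exp (-c * Real.exp (-x))) := by
      intro x
      rw [hν, gumbel_Iio hc]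
    simp_rw [hslice, hνIio]
    rw [hμ, gumbel_lintegral hc]
    congr 1
    have hsum : ∑ k, Real.exp (a k) = Real.exp (a j) * (1 + c) := by
      have h1 : Real.exp (a j) * (1 + c) = Real.exp (a j) + ∑ k ∈ s, Real.exp (a k) := by
        rw [hcdef, mul_add, mul_one, Finset.mul_sum]
        congr 1
        refine Finset.sum_congr rfl fun k _ => ?_
        rw [← Real.exp_add]
        ring_nf
      rw [h1, hsdef]
      exact (Finset.add_sum_erase _ _ (Finset.mem_univ j)).symm
    have h1c : (1 : ℝ) + c ≠ 0 := by linarith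
    rw [hsum, div_eq_div_iff h1c (mul_ne_zero (Real.exp_ne_zero _) h1c)]
    ring
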